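/- Let 𝔉 be a finite triangle-free family of frames in general position and let L be a layer of 𝔉. Then L is a clean family of frames. -/

import Mathlib

open Set

/-- An axis-aligned rectangle `[l, r] × [b, t]` with `l < r` and `b < t`. -/
structure Rect where
  l : ℝ
  r : ℝ
  b : ℝ
  t : ℝ
  hlr : l < r
  hbt : b < t

noncomputable instance : DecidableEq Rect := Classical.decEq _

/-- The filling rectangle, as a subset of the plane. -/
def Rect.toSet (R : Rect) : Set (ℝ × ℝ) := Set.Icc R.l R.r ×ˢ Set.Icc R.b R.t

/-- The frame: the boundary (topological frontier) of the filling rectangle. -/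
def Rect.frame (R : Rect) : Set (ℝ × ℝ) := frontier R.toSet

/-- A family of frames is in general position. -/
def GenPos (𝔉 : Finset Rect) : Prop :=
  ∀ F ∈ 𝔉, ∀ F' ∈ 𝔉, F ≠ F' →
    [F.l, F.r, F'.l, F'.r].Pairwise (· ≠ ·) ∧
    [F.b, F.t, F'.b, F'.t].Pairwise (· ≠ ·)

/-- The intersection graph of a family of frames. -/
def frameGraph (𝔉 : Finset Rect) : SimpleGraph {F : Rect // F ∈ 𝔉} where
  Adj F F' := F ≠ F' ∧ (F.1.frame ∩ F'.1.frame).Nonempty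
  symm := by
    constructor; intro a b h
    exact ⟨h.1.symm, by rw [Set.inter_comm]; exact h.2⟩
  loopless := by constructor; intro a h; exact h.1 rfl

/-- The intersection of frames `F` and `F'` is rightward-directed. -/
def RightDir (F F' : Rect) : Prop :=
  F.l < F'.l ∧ F'.l < F.r ∧ F.r < F'.r ∧ F.b < F'.b ∧ F'.b < F'.t ∧ F'.t < F.t

/-- The intersection of frames `F` and `F'` is leftward-directed. -/
def LeftDir (F F' : Rect) : Prop :=
  F'.l < F.l ∧ F.l < F'.r ∧ F'.r < F.r ∧ F.b < F'.b ∧ F'.b < F'.t ∧ F'.t < F.t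

/-- The intersection of frames `F` and `F'` is upward-directed. -/
def UpDir (F F' : Rect) : Prop :=
  F.b < F'.b ∧ F'.b < F.t ∧ F.t < F'.t ∧ F.l < F'.l ∧ F'.l < F'.r ∧ F'.r < F.r

/-- The intersection of frames `F` and `F'` is downward-directed. -/
def DownDir (F F' : Rect) : Prop :=
  F'.b < F.b ∧ F.b < F'.t ∧ F'.t < F.t ∧ F.l < F'.l ∧ F'.l < F'.r ∧ F'.r < F.r

/-- Any two intersecting frames of the family satisfy `P` (in one of the two orders). -/
def IntersectingPairsSatisfy (𝔉 : Finset Rect) (P : Rect → Rect → Prop) : Prop :=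
  ∀ F ∈ 𝔉, ∀ F' ∈ 𝔉, F ≠ F' → (F.frame ∩ F'.frame).Nonempty → P F F' ∨ P F' F

def IsRightwardDirected (𝔉 : Finset Rect) : Prop := IntersectingPairsSatisfy 𝔉 RightDir

/-- A directed family of frames. -/
def IsDirectedFamily (𝔉 : Finset Rect) : Prop :=
  IntersectingPairsSatisfy 𝔉 RightDir ∨ IntersectingPairsSatisfy 𝔉 LeftDir ∨
    IntersectingPairsSatisfy 𝔉 UpDir ∨ IntersectingPairsSatisfy 𝔉 DownDir

/-- `F` is enclosed by `F'`. -/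
def Enclosed (F F' : Rect) : Prop :=
  F'.l < F.l ∧ F.r < F'.r ∧ F'.b < F.b ∧ F.t < F'.t

/-- A clean family of frames. -/
def Clean (𝔉 : Finset Rect) : Prop :=
  ¬ ∃ F₁ ∈ 𝔉, ∃ F₂ ∈ 𝔉, ∃ F₃ ∈ 𝔉, F₁ ≠ F₂ ∧
    (Rect.frame F₁ ∩ Rect.frame F₂).Nonempty ∧ Enclosed F₃ F₁ ∧ Enclosed F₃ F₂

/-- The overlap graph of a family of rectangles: two rectangles are adjacent if they
intersect but neither is a subset of the other. -/
def overlapGraph (𝔉 : Finset Rect) : SimpleGraph {R : Rect // R ∈ 𝔉} where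
  Adj R S := (R.1.toSet ∩ S.1.toSet).Nonempty ∧ ¬ R.1.toSet ⊆ S.1.toSet ∧ ¬ S.1.toSet ⊆ R.1.toSet
  symm := by
    constructor; intro a b h
    exact ⟨by rw [Set.inter_comm]; exact h.1, h.2.2, h.2.1⟩
  loopless := by constructor; intro a h; exact h.2.1 subset_rfl

/-- `L` is a layer of the family `𝔉` of frames. -/
def IsLayer (𝔉 L : Finset Rect) : Prop :=
  L ⊆ 𝔉 ∧ (L.card = 1 ∨ ∀ F ∈ L, ∃ F' ∈ 𝔉, F' ∉ L ∧
    ¬ (F'.frame ⊆ ⋃ F'' ∈ L, Rect.toSet F'') ∧ (F.frame ∩ F'.frame).Nonempty)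

/-- `L` is an `m`-fold layer of `𝔉`. -/
def IsMFoldLayer : ℕ → Finset Rect → Finset Rect → Prop
  | 0, 𝔉, L => L = 𝔉
  | m + 1, 𝔉, L => ∃ L', IsMFoldLayer m 𝔉 L' ∧ IsLayer L' L

/-- Two families of frames are mutually independent: no frame of one intersects a
frame of the other. -/
def MutuallyIndependent (L L' : Finset Rect) : Prop :=
  ∀ F ∈ L, ∀ F' ∈ L', Rect.frame F ∩ Rect.frame F' = ∅

lemma Rect.isClosed_toSet (R : Rect) : IsClosed R.toSet :=
  isClosed_Icc.prod isClosed_Icc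

lemma Rect.frame_subset (R : Rect) : R.frame ⊆ R.toSet :=
  R.isClosed_toSet.frontier_subset

lemma Rect.interior_toSet (R : Rect) :
    interior R.toSet = Ioo R.l R.r ×ˢ Ioo R.b R.t := by
  rw [Rect.toSet, interior_prod_eq, interior_Icc, interior_Icc]

lemma Rect.frame_eq (R : Rect) :
    R.frame = (Icc R.l R.r ×ˢ ({R.b, R.t} : Set ℝ)) ∪ (({R.l, R.r} : Set ℝ) ×ˢ Icc R.b R.t) := by
  rw [Rect.frame, Rect.toSet, frontier_prod_eq, closure_Icc, closure_Icc,
    frontier_Icc R.hlr.le, frontier_Icc R.hbt.le]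

lemma Rect.frame_isConnected (R : Rect) : IsConnected R.frame := by
  have hIccx : IsConnected (Icc R.l R.r) := ⟨nonempty_Icc.2 R.hlr.le, isPreconnected_Icc⟩
  have hIccy : IsConnected (Icc R.b R.t) := ⟨nonempty_Icc.2 R.hbt.le, isPreconnected_Icc⟩
  have hL1 : IsConnected (({R.l} : Set ℝ) ×ˢ Icc R.b R.t) :=
    isConnected_singleton.prod hIccy
  have hL2 : IsConnected (({R.r} : Set ℝ) ×ˢ Icc R.b R.t) :=
    isConnected_singleton.prod hIccy
  have hB1 : IsConnected (Icc R.l R.r ×ˢ ({R.b} : Set ℝ)) :=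
    hIccx.prod isConnected_singleton
  have hB2 : IsConnected (Icc R.l R.r ×ˢ ({R.t} : Set ℝ)) :=
    hIccx.prod isConnected_singleton
  have hlb : (R.l, R.b) ∈ (({R.l} : Set ℝ) ×ˢ Icc R.b R.t) ∩ (Icc R.l R.r ×ˢ ({R.b} : Set ℝ)) := by
    constructor <;> constructor <;>
      simp [le_refl, R.hlr.le, R.hbt.le]
  have hS1 : IsConnected ((({R.l} : Set ℝ) ×ˢ Icc R.b R.t) ∪ (Icc R.l R.r ×ˢ ({R.b} : Set ℝ))) :=
    IsConnected.union ⟨_, hlb⟩ hL1 hB1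
  have hrb : (R.r, R.b) ∈ ((({R.l} : Set ℝ) ×ˢ Icc R.b R.t) ∪ (Icc R.l R.r ×ˢ ({R.b} : Set ℝ))) ∩
      (({R.r} : Set ℝ) ×ˢ Icc R.b R.t) := by
    constructor
    · right; constructor <;> simp [le_refl, R.hlr.le, R.hbt.le]
    · constructor <;> simp [le_refl, R.hbt.le]
  have hS2 := IsConnected.union ⟨_, hrb⟩ hS1 hL2
  have hlt : (R.l, R.t) ∈ (((({R.l} : Set ℝ) ×ˢ Icc R.b R.t) ∪ (Icc R.l R.r ×ˢ ({R.b} : Set ℝ))) ∪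
      (({R.r} : Set ℝ) ×ˢ Icc R.b R.t)) ∩ (Icc R.l R.r ×ˢ ({R.t} : Set ℝ)) := by
    constructor
    · left; left; constructor <;> simp [le_refl, R.hlr.le, R.hbt.le]
    · constructor <;> simp [le_refl, R.hlr.le]
  have hS3 := IsConnected.union ⟨_, hlt⟩ hS2 hB2
  have : R.frame = ((({R.l} : Set ℝ) ×ˢ Icc R.b R.t) ∪ (Icc R.l R.r ×ˢ ({R.b} : Set ℝ))) ∪
      (({R.r} : Set ℝ) ×ˢ Icc R.b R.t) ∪ (Icc R.l R.r ×ˢ ({R.t} : Set ℝ)) := by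
    rw [Rect.frame_eq]
    ext z
    simp only [mem_union, mem_prod, mem_insert_iff, mem_singleton_iff]
    tauto
  rw [this]; exact hS3

/-- Crossing lemma: a connected frame with a point inside and a point outside
a rectangle must meet its frame. -/
lemma cross (F F' : Rect) {x y : ℝ × ℝ} (hx : x ∈ F'.frame)
    (hxi : x ∈ interior F.toSet) (hy : y ∈ F'.frame) (hyo : y ∉ F.toSet) :
    (F.frame ∩ F'.frame).Nonempty := by
  by_contra h
  rw [Set.not_nonempty_iff_eq_empty] at h
  have hdisj : ∀ z ∈ F'.frame, z ∉ F.frame := by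
    intro z hz hz'
    have : z ∈ F.frame ∩ F'.frame := ⟨hz', hz⟩
    rw [h] at this
    exact this
  have hsub : F'.frame ⊆ interior F.toSet ∪ F.toSetᶜ := by
    intro z hz
    by_cases hzF : z ∈ F.toSet
    · left
      have hcl : z ∈ closure F.toSet := subset_closure hzF
      have : z ∉ frontier F.toSet := hdisj z hz
      rw [frontier, Set.mem_diff] at this
      push_neg at this
      exact this hcl
    · right; exact hzF
  have hU : (F'.frame ∩ interior F.toSet).Nonempty := ⟨x, hx, hxi⟩
  have hV : (F'.frame ∩ F.toSetᶜ).Nonempty := ⟨y, hy, hyo⟩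
  obtain ⟨z, _, hz1, hz2⟩ := (F'.frame_isConnected.isPreconnected) _ _
    isOpen_interior F.isClosed_toSet.isOpen_compl hsub hU hV
  exact hz2 (interior_subset hz1)

/-- Every layer of a triangle-free family of frames in general position is clean. -/
theorem stmt19 (𝔉 : Finset Rect) (hgp : GenPos 𝔉)
    (htf : (frameGraph 𝔉).CliqueFree 3)
    (L : Finset Rect) (hL : IsLayer 𝔉 L) : Clean L := by

  rintro ⟨F₁, hF₁, F₂, hF₂, F₃, hF₃, hne, hint, he₁, he₂⟩
  obtain ⟨hLsub, hlayer⟩ := hL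
  rcases hlayer with hcard | hlayer
  · have := Finset.one_lt_card.mpr ⟨F₁, hF₁, F₂, hF₂, hne⟩
    omega
  obtain ⟨F', hF'F, hF'L, hF'ext, hF'int⟩ := hlayer F₃ hF₃
  obtain ⟨x, hxF₃, hxF'⟩ := hF'int
  rw [Set.not_subset] at hF'ext
  obtain ⟨y, hyF', hy⟩ := hF'ext
  have hy₁ : y ∉ F₁.toSet := fun hc => hy (Set.mem_biUnion hF₁ hc)
  have hy₂ : y ∉ F₂.toSet := fun hc => hy (Set.mem_biUnion hF₂ hc)
  obtain ⟨h1, h2⟩ := F₃.frame_subset hxF₃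
  have hx₁ : x ∈ interior F₁.toSet := by
    rw [Rect.interior_toSet]
    exact ⟨⟨lt_of_lt_of_le he₁.1 h1.1, lt_of_le_of_lt h1.2 he₁.2.1⟩,
      ⟨lt_of_lt_of_le he₁.2.2.1 h2.1, lt_of_le_of_lt h2.2 he₁.2.2.2⟩⟩
  have hx₂ : x ∈ interior F₂.toSet := by
    rw [Rect.interior_toSet]
    exact ⟨⟨lt_of_lt_of_le he₂.1 h1.1, lt_of_le_of_lt h1.2 he₂.2.1⟩,
      ⟨lt_of_lt_of_le he₂.2.2.1 h2.1, lt_of_le_of_lt h2.2 he₂.2.2.2⟩⟩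
  have adj1 : (F₁.frame ∩ F'.frame).Nonempty := cross F₁ F' hxF' hx₁ hyF' hy₁
  have adj2 : (F₂.frame ∩ F'.frame).Nonempty := cross F₂ F' hxF' hx₂ hyF' hy₂
  have hne1 : F₁ ≠ F' := fun h => hF'L (h ▸ hF₁)
  have hne2 : F₂ ≠ F' := fun h => hF'L (h ▸ hF₂)
  refine htf {⟨F₁, hLsub hF₁⟩, ⟨F₂, hLsub hF₂⟩, ⟨F', hF'F⟩}
    (SimpleGraph.is3Clique_triple_iff.mpr ⟨?_, ?_, ?_⟩)
  · exact ⟨fun h => hne (congrArg Subtype.val h), hint⟩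
  · exact ⟨fun h => hne1 (congrArg Subtype.val h), adj1⟩
  · exact ⟨fun h => hne2 (congrArg Subtype.val h), adj2⟩
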